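/- Let 0 < β < 1, p = ⌈1/β⌉ − 1, and let G be a graph on n vertices with minimum degree at least (1−β)n. Then G is K_{p+2}-free if and only if G is heavy-free, i.e. D_+(T) = 0 for every clique T on at most p+1 vertices, where D_+(T) = max{0, d(T)/n − (p−|T|+1)β}. -/

import Mathlib

/-- The degree of a clique `S`: the number of vertices adjacent to every vertex of `S`. -/
def cliqueDeg {V : Type*} [Fintype V] [DecidableEq V] (G : SimpleGraph V)
    [DecidableRel G.Adj] (S : Finset V) : ℕ :=
  (Finset.univ.filter (fun v => ∀ u ∈ S, G.Adj u v)).card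

/-- `D_+(U) = max {0, d(U)/n - (p - |U| + 1)β}`. -/
noncomputable def Dplus {V : Type*} [Fintype V] [DecidableEq V] (G : SimpleGraph V)
    [DecidableRel G.Adj] (n p : ℕ) (β : ℝ) (U : Finset V) : ℝ :=
  max 0 ((cliqueDeg G U : ℝ) / n - ((p : ℝ) - U.card + 1) * β)

lemma cliqueDeg_insert {V : Type*} [Fintype V] [DecidableEq V] (G : SimpleGraph V)
    [DecidableRel G.Adj] (T : Finset V) (v : V) :
    cliqueDeg G T + G.degree v ≤ cliqueDeg G (insert v T) + Fintype.card V := by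
  classical
  set A := Finset.univ.filter (fun w => ∀ u ∈ T, G.Adj u w) with hA
  have hinter : (Finset.univ.filter (fun w => ∀ u ∈ insert v T, G.Adj u w))
      = A ∩ G.neighborFinset v := by
    ext w
    simp [hA, SimpleGraph.mem_neighborFinset, and_comm]
  have h1 : (A ∩ G.neighborFinset v).card + (A ∪ G.neighborFinset v).card
      = A.card + (G.neighborFinset v).card := Finset.card_inter_add_card_union _ _
  have h2 : (A ∪ G.neighborFinset v).card ≤ Fintype.card V := Finset.card_le_univ _
  have h3 : (G.neighborFinset v).card = G.degree v := rfl
  have h4 : cliqueDeg G T = A.card := rfl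
  have h5 : cliqueDeg G (insert v T) = (A ∩ G.neighborFinset v).card := by
    rw [cliqueDeg, hinter]
  omega

lemma grow {V : Type*} [Fintype V] [DecidableEq V] (G : SimpleGraph V)
    [DecidableRel G.Adj] (β : ℝ) (hβ0 : 0 < β)
    (hδ : ∀ v : V, (1 - β) * (Fintype.card V : ℝ) ≤ (G.degree v : ℝ)) :
    ∀ j : ℕ, ∀ T : Finset V, G.IsClique (T : Set V) →
      ((j : ℝ) - 1) * β * (Fintype.card V) < (cliqueDeg G T : ℝ) →
      ∃ S : Finset V, G.IsClique (S : Set V) ∧ S.card = T.card + j := by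
  intro j
  induction j with
  | zero => intro T hT _; exact ⟨T, hT, rfl⟩
  | succ j ih =>
    intro T hT hd
    have hN : (0:ℝ) ≤ (Fintype.card V : ℝ) := by positivity
    have hj : (j : ℝ) * β * (Fintype.card V) < (cliqueDeg G T : ℝ) := by
      push_cast at hd; nlinarith
    have hnn : (0:ℝ) ≤ (j : ℝ) * β * (Fintype.card V) := by positivity
    have hpos : 0 < cliqueDeg G T := by
      rcases Nat.eq_zero_or_pos (cliqueDeg G T) with h0 | h0
      · exfalso; rw [h0] at hj; norm_num at hj; linarith
      · exact h0
    obtain ⟨v, hv⟩ : ∃ v, ∀ u ∈ T, G.Adj u v := by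
      have : (Finset.univ.filter (fun w => ∀ u ∈ T, G.Adj u w)).Nonempty := by
        rw [← Finset.card_pos]; exact hpos
      obtain ⟨v, hv⟩ := this
      exact ⟨v, (Finset.mem_filter.1 hv).2⟩
    have hvT : v ∉ T := fun hvT => (G.loopless.irrefl v) (hv v hvT)
    have hclique : G.IsClique ((insert v T : Finset V) : Set V) := by
      rw [Finset.coe_insert]
      exact hT.insert (fun b hb _ => (hv b hb).symm)
    have hstep := cliqueDeg_insert G T v
    have hdeg := hδ v
    have hd' : ((j : ℝ) - 1) * β * (Fintype.card V) < (cliqueDeg G (insert v T) : ℝ) := by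
      have : (cliqueDeg G T : ℝ) + (G.degree v : ℝ)
          ≤ (cliqueDeg G (insert v T) : ℝ) + (Fintype.card V : ℝ) := by
        exact_mod_cast hstep
      nlinarith
    obtain ⟨S, hS1, hS2⟩ := ih (insert v T) hclique hd'
    refine ⟨S, hS1, ?_⟩
    rw [hS2, Finset.card_insert_of_notMem hvT]
    omega

theorem stmt_8 {V : Type*} [Fintype V] [DecidableEq V] (n : ℕ)
    (hV : Fintype.card V = n) (G : SimpleGraph V) [DecidableRel G.Adj]
    (β : ℝ) (hβ0 : 0 < β) (hβ1 : β < 1) (p : ℕ) (hp : p = ⌈1 / β⌉₊ - 1)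
    (hδ : ∀ v : V, (1 - β) * n ≤ (G.degree v : ℝ)) :
    G.CliqueFree (p + 2) ↔
      ∀ T : Finset V, G.IsClique (T : Set V) → T.card ≤ p + 1 →
        Dplus G n p β T = 0 := by
  subst hV
  constructor
  · intro hfree T hT hcard
    rw [Dplus, max_eq_left_iff]
    by_contra h
    push_neg at h
    -- h : d/n - (p - t + 1)β > 0
    have hN : (0:ℝ) ≤ (Fintype.card V : ℝ) := by positivity
    have hc : (0:ℝ) ≤ ((p : ℝ) - T.card + 1) := by
      have : (T.card : ℝ) ≤ (p : ℝ) + 1 := by exact_mod_cast hcard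
      linarith
    have hNpos : (0:ℝ) < (Fintype.card V : ℝ) := by
      rcases hN.lt_or_eq with h' | h'
      · exact h'
      · exfalso
        rw [← h'] at h
        simp only [div_zero] at h
        nlinarith
    have hdT : ((p : ℝ) - T.card + 1) * β * (Fintype.card V) < (cliqueDeg G T : ℝ) := by
      rw [div_sub' (ne_of_gt hNpos)] at h
      have := (div_pos_iff.1 h)
      rcases this with ⟨h1, _⟩ | ⟨_, h2⟩
      · nlinarith
      · linarith
    set j := p + 2 - T.card with hj
    have hjcast : (j : ℝ) - 1 = (p : ℝ) - T.card + 1 := by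
      have : (j : ℝ) = (p : ℝ) + 2 - T.card := by
        rw [hj]
        have h2 : T.card ≤ p + 2 := by omega
        push_cast [Nat.cast_sub h2]
        ring
      rw [this]; ring
    obtain ⟨S, hS1, hS2⟩ := grow G β hβ0 hδ j T hT (by rw [hjcast]; exact hdT)
    exact hfree S ⟨hS1, by omega⟩
  · intro h S hS
    have hcard : 0 < S.card := by rw [hS.2]; omega
    obtain ⟨v, hv⟩ := Finset.card_pos.1 hcard
    set T := S.erase v with hT
    have hTcard : T.card = p + 1 := by
      rw [hT, Finset.card_erase_of_mem hv, hS.2]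
      omega

    have hTclique : G.IsClique (T : Set V) :=
      hS.1.subset (by intro x hx; exact Finset.mem_of_mem_erase hx)
    have hdpos : 0 < cliqueDeg G T := by
      rw [cliqueDeg, Finset.card_pos]
      refine ⟨v, Finset.mem_filter.2 ⟨Finset.mem_univ v, fun u hu => ?_⟩⟩
      exact hS.1 (Finset.mem_of_mem_erase hu) hv (Finset.ne_of_mem_erase hu)
    have hNpos : (0:ℝ) < (Fintype.card V : ℝ) := by
      exact_mod_cast (Fintype.card_pos_iff.2 ⟨v⟩)
    have := h T hTclique (le_of_eq hTcard)
    rw [Dplus, hTcard] at this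
    have hz : ((p : ℝ) - (↑(p + 1) : ℝ) + 1) * β = 0 := by push_cast; ring
    rw [hz, sub_zero] at this
    have : (cliqueDeg G T : ℝ) / (Fintype.card V) > 0 := by
      apply div_pos _ hNpos
      exact_mod_cast hdpos
    rw [max_eq_left_iff] at *
    linarith [h T hTclique (le_of_eq hTcard)]
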